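/- Let $n \geq 0$ and $m \geq 0$ be integers. Then $$\sum_{k=0}^m \frac{(-m)_k\,\left(m+n+\tfrac{3}{2}\right)_k}{\left(\tfrac{3}{2}\right)_k\,k!}\,\frac{\Gamma\!\left(k+\tfrac{1}{2}\right)}{\Gamma\!\left(k+n+\tfrac{3}{2}\right)} = \frac{\pi\,\Gamma(m+1)\,\Gamma(m+n+1)}{2\,\Gamma(n+1)\,\Gamma\!\left(m+n+\tfrac{3}{2}\right)\Gamma\!\left(m+\tfrac{3}{2}\right)}.$$ -/

import Mathlib

open Real Finset

noncomputable def poch (a : ℝ) (k : ℕ) : ℝ := (ascPochhammer ℝ k).eval a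

lemma poch_zero (a : ℝ) : poch a 0 = 1 := by simp [poch]

lemma poch_succ (a : ℝ) (k : ℕ) : poch a (k+1) = poch a k * (a + k) :=
  ascPochhammer_succ_eval k a

lemma poch_succ_left (a : ℝ) (k : ℕ) : poch a (k+1) = a * poch (a+1) k := by
  unfold poch
  rw [ascPochhammer_succ_left]
  simp [Polynomial.eval_comp]

lemma poch_mul (a : ℝ) (k : ℕ) : poch a k * (a + k) = a * poch (a+1) k := by
  rw [← poch_succ, poch_succ_left]

lemma poch_pos {a : ℝ} (ha : 0 < a) (k : ℕ) : 0 < poch a k := by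
  induction k with
  | zero => simp [poch_zero]
  | succ k ih =>
      rw [poch_succ]
      have : (0:ℝ) < a + k := by positivity
      positivity

lemma poch_neg_nat (m : ℕ) : poch (-(m:ℝ)) (m+1) = 0 := by
  rw [poch_succ]; simp

lemma gamma_shift (x : ℝ) (hx : 0 < x) (k : ℕ) :
    Real.Gamma ((k:ℝ) + x) = poch x k * Real.Gamma x := by
  induction k with
  | zero => simp [poch_zero]
  | succ k ih =>
      have h1 : ((k+1 : ℕ):ℝ) + x = ((k:ℝ) + x) + 1 := by push_cast; ring
      have h2 : (k:ℝ) + x ≠ 0 := by positivity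
      rw [h1, Real.Gamma_add_one h2, ih, poch_succ]
      ring

noncomputable def Tt (n m k : ℕ) : ℝ :=
  poch (-(m:ℝ)) k * poch ((m:ℝ) + n + 3/2) k * poch (1/2) k /
    (poch (3/2) k * poch ((n:ℝ) + 3/2) k * (Nat.factorial k : ℝ))

noncomputable def rho (n m k : ℕ) : ℝ :=
  -(((m:ℝ) + n + 3/2) + ((m:ℝ)+1)) * k * ((k:ℝ) + 1/2) * ((k:ℝ) + n + 1/2) /
    ((((m:ℝ)+1) + 1/2) * ((m:ℝ)+1) * ((m:ℝ) + n + 3/2) * (((m:ℝ) + n + 3/2) + k))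

noncomputable def GG (n m k : ℕ) : ℝ := rho n m k * Tt n (m+1) k

noncomputable def rr (n m : ℕ) : ℝ :=
  ((m:ℝ)+1) * ((m:ℝ) + n + 1) / (((m:ℝ) + 3/2) * ((m:ℝ) + n + 3/2))

set_option maxHeartbeats 1000000 in
lemma step_k (n m k : ℕ) :
    Tt n (m+1) k - rr n m * Tt n m k = GG n m (k+1) - GG n m k := by
  have hm1 : ((m:ℝ)+1) ≠ 0 := by positivity
  have ha : ((m:ℝ) + n + 3/2) ≠ 0 := by positivity
  have hak : ((m:ℝ) + n + 3/2) + k ≠ 0 := by positivity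
  have hak1 : ((m:ℝ) + n + 3/2) + ((k:ℝ)+1) ≠ 0 := by positivity
  have hm32 : ((m:ℝ) + 3/2) ≠ 0 := by positivity
  have hm12 : (((m:ℝ)+1) + 1/2) ≠ 0 := by positivity
  have hk1 : ((k:ℝ)+1) ≠ 0 := by positivity
  have hk32 : ((3:ℝ)/2 + k) ≠ 0 := by positivity
  have hnk : ((n:ℝ) + 3/2 + k) ≠ 0 := by positivity
  have hB : poch (3/2 : ℝ) k ≠ 0 := (poch_pos (by norm_num) k).ne'
  have hC : poch ((n:ℝ) + 3/2) k ≠ 0 := (poch_pos (by positivity) k).ne'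
  have hf : ((Nat.factorial k : ℕ):ℝ) ≠ 0 := by
    exact_mod_cast (Nat.factorial_pos k).ne'
  have harg1 : -((↑(m+1):ℝ)) = -((m:ℝ)+1) := by push_cast; ring
  have harg2 : (↑(m+1):ℝ) + n + 3/2 = (m:ℝ) + n + 3/2 + 1 := by push_cast; ring
  have hmk' : poch (-((m:ℝ)+1)) k * (-((m:ℝ)+1) + k) = (-((m:ℝ)+1)) * poch (-(m:ℝ)) k := by
    have h := poch_mul (-((m:ℝ)+1)) k
    rw [show -((m:ℝ)+1)+1 = -(m:ℝ) by ring] at h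
    exact h
  have hyk' : poch ((m:ℝ) + n + 3/2) k * (((m:ℝ) + n + 3/2) + k)
      = ((m:ℝ) + n + 3/2) * poch ((m:ℝ) + n + 3/2 + 1) k := poch_mul _ k
  have e2 : Tt n m k = (((m:ℝ)+1-k) * ((m:ℝ)+n+3/2)) /
      (((m:ℝ)+1) * (((m:ℝ)+n+3/2)+k)) * Tt n (m+1) k := by
    rw [div_mul_eq_mul_div, eq_div_iff (mul_ne_zero hm1 hak)]
    unfold Tt
    rw [harg1, harg2]
    linear_combination
      (((((m:ℝ)+n+3/2)+k) * poch ((m:ℝ)+n+3/2) k *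
        (poch (1/2) k / (poch (3/2) k * poch ((n:ℝ)+3/2) k * (Nat.factorial k : ℝ)))) * hmk') +
      (((((m:ℝ)+1)-(k:ℝ)) * poch (-((m:ℝ)+1)) k *
        (poch (1/2) k / (poch (3/2) k * poch ((n:ℝ)+3/2) k * (Nat.factorial k : ℝ)))) * hyk')
  have e3 : Tt n (m+1) (k+1) =
      (((k:ℝ)-((m:ℝ)+1)) * (((m:ℝ)+n+3/2+1)+k) * (1/2+(k:ℝ))) /
        ((3/2+(k:ℝ)) * (((n:ℝ)+3/2)+(k:ℝ)) * ((k:ℝ)+1)) * Tt n (m+1) k := by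
    unfold Tt
    rw [harg1, harg2, poch_succ (-((m:ℝ)+1)) k, poch_succ ((m:ℝ)+n+3/2+1) k,
      poch_succ (1/2:ℝ) k, poch_succ (3/2:ℝ) k, poch_succ ((n:ℝ)+3/2) k,
      Nat.factorial_succ k]
    push_cast
    field_simp [hk1, hk32, hnk, hB, hC, hf]
    ring
  rw [e2]
  unfold GG
  rw [e3]
  unfold rho rr
  push_cast
  field_simp [hm1, ha, hak, hak1, hm32, hm12, hk1, hk32, hnk]
  ring

lemma sum_Tt (n m : ℕ) : ∑ k ∈ Finset.range (m+1), Tt n m k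
    = (Nat.factorial m : ℝ) * poch ((n:ℝ)+1) m / (poch (3/2) m * poch ((n:ℝ)+3/2) m) := by
  induction m with
  | zero => simp [Tt, poch_zero]
  | succ m ih =>
      have h0 : ∑ k ∈ Finset.range (m+2), (Tt n (m+1) k - rr n m * Tt n m k) = 0 := by
        calc ∑ k ∈ Finset.range (m+2), (Tt n (m+1) k - rr n m * Tt n m k)
            = ∑ k ∈ Finset.range (m+2), (GG n m (k+1) - GG n m k) :=
              Finset.sum_congr rfl (fun k _ => step_k n m k)
          _ = GG n m (m+2) - GG n m 0 := Finset.sum_range_sub (GG n m) (m+2)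
          _ = 0 := by
              have h1 : GG n m 0 = 0 := by simp [GG, rho]
              have h2 : GG n m (m+2) = 0 := by
                have hT : Tt n (m+1) (m+1+1) = 0 := by
                  unfold Tt
                  rw [poch_neg_nat (m+1)]
                  simp
                have : Tt n (m+1) (m+2) = 0 := hT
                simp [GG, this]
              rw [h1, h2, sub_zero]
      have hsum : ∑ k ∈ Finset.range (m+2), Tt n (m+1) k
          = rr n m * ∑ k ∈ Finset.range (m+2), Tt n m k := by
        rw [Finset.sum_sub_distrib, ← Finset.mul_sum] at h0
        linarith [h0]
      have hTm : Tt n m (m+1) = 0 := by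
        unfold Tt
        rw [poch_neg_nat m]
        simp
      rw [hsum, Finset.sum_range_succ, hTm, add_zero, ih]
      unfold rr
      rw [poch_succ ((n:ℝ)+1) m, poch_succ (3/2 : ℝ) m, poch_succ ((n:ℝ)+3/2) m,
        Nat.factorial_succ]
      have hb : poch (3/2 : ℝ) m ≠ 0 := (poch_pos (by norm_num) m).ne'
      have hc : poch ((n:ℝ)+3/2) m ≠ 0 := (poch_pos (by positivity) m).ne'
      have h1 : ((m:ℝ) + 3/2) ≠ 0 := by positivity
      have h2 : ((m:ℝ) + n + 3/2) ≠ 0 := by positivity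
      have h3 : ((3:ℝ)/2 + m) ≠ 0 := by positivity
      have h4 : ((n:ℝ) + 3/2 + m) ≠ 0 := by positivity
      push_cast
      field_simp
      ring

theorem stmt16 (n m : ℕ) :
    ∑ k ∈ Finset.range (m+1),
        poch (-(m:ℝ)) k * poch ((m:ℝ) + (n:ℝ) + 3/2) k /
            (poch (3/2) k * (Nat.factorial k : ℝ)) *
          (Real.Gamma ((k:ℝ) + 1/2) / Real.Gamma ((k:ℝ) + (n:ℝ) + 3/2)) =
      Real.pi * Real.Gamma ((m:ℝ) + 1) * Real.Gamma ((m:ℝ) + (n:ℝ) + 1) /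
        (2 * Real.Gamma ((n:ℝ) + 1) * Real.Gamma ((m:ℝ) + (n:ℝ) + 3/2) *
          Real.Gamma ((m:ℝ) + 3/2)) := by
  have hΓn : (0:ℝ) < Real.Gamma ((n:ℝ) + 3/2) := Real.Gamma_pos_of_pos (by positivity)
  have hsπ : (0:ℝ) < Real.sqrt π := Real.sqrt_pos.mpr Real.pi_pos
  have key : ∀ k : ℕ,
      poch (-(m:ℝ)) k * poch ((m:ℝ) + (n:ℝ) + 3/2) k /
          (poch (3/2) k * (Nat.factorial k : ℝ)) *
        (Real.Gamma ((k:ℝ) + 1/2) / Real.Gamma ((k:ℝ) + (n:ℝ) + 3/2))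
      = (Real.sqrt π / Real.Gamma ((n:ℝ) + 3/2)) * Tt n m k := by
    intro k
    have h1 : Real.Gamma ((k:ℝ) + 1/2) = poch (1/2) k * Real.sqrt π := by
      rw [gamma_shift (1/2) (by norm_num) k, Real.Gamma_one_half_eq]
    have h2 : Real.Gamma ((k:ℝ) + (n:ℝ) + 3/2)
        = poch ((n:ℝ)+3/2) k * Real.Gamma ((n:ℝ) + 3/2) := by
      rw [show (k:ℝ) + (n:ℝ) + 3/2 = (k:ℝ) + ((n:ℝ) + 3/2) by ring,
        gamma_shift _ (by positivity) k]
    rw [h1, h2]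
    unfold Tt
    have hB : poch (3/2 : ℝ) k ≠ 0 := (poch_pos (by norm_num) k).ne'
    have hC : poch ((n:ℝ) + 3/2) k ≠ 0 := (poch_pos (by positivity) k).ne'
    have hf : ((Nat.factorial k : ℕ):ℝ) ≠ 0 := by
      exact_mod_cast (Nat.factorial_pos k).ne'
    field_simp
  calc ∑ k ∈ Finset.range (m+1),
        poch (-(m:ℝ)) k * poch ((m:ℝ) + (n:ℝ) + 3/2) k /
            (poch (3/2) k * (Nat.factorial k : ℝ)) *
          (Real.Gamma ((k:ℝ) + 1/2) / Real.Gamma ((k:ℝ) + (n:ℝ) + 3/2))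
      = ∑ k ∈ Finset.range (m+1), (Real.sqrt π / Real.Gamma ((n:ℝ) + 3/2)) * Tt n m k :=
        Finset.sum_congr rfl (fun k _ => key k)
    _ = (Real.sqrt π / Real.Gamma ((n:ℝ) + 3/2)) *
        ((Nat.factorial m : ℝ) * poch ((n:ℝ)+1) m / (poch (3/2) m * poch ((n:ℝ)+3/2) m)) := by
        rw [← Finset.mul_sum, sum_Tt]
    _ = Real.pi * Real.Gamma ((m:ℝ) + 1) * Real.Gamma ((m:ℝ) + (n:ℝ) + 1) /
        (2 * Real.Gamma ((n:ℝ) + 1) * Real.Gamma ((m:ℝ) + (n:ℝ) + 3/2) *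
          Real.Gamma ((m:ℝ) + 3/2)) := by
        have g1 : Real.Gamma ((m:ℝ) + 1) = (Nat.factorial m : ℝ) :=
          Real.Gamma_nat_eq_factorial m
        have g2 : Real.Gamma ((n:ℝ) + 1) = (Nat.factorial n : ℝ) :=
          Real.Gamma_nat_eq_factorial n
        have g3 : Real.Gamma ((m:ℝ) + (n:ℝ) + 1)
            = poch ((n:ℝ)+1) m * (Nat.factorial n : ℝ) := by
          rw [show (m:ℝ) + (n:ℝ) + 1 = (m:ℝ) + ((n:ℝ) + 1) by ring,
            gamma_shift _ (by positivity) m, g2]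
        have g4 : Real.Gamma ((m:ℝ) + (n:ℝ) + 3/2)
            = poch ((n:ℝ)+3/2) m * Real.Gamma ((n:ℝ) + 3/2) := by
          rw [show (m:ℝ) + (n:ℝ) + 3/2 = (m:ℝ) + ((n:ℝ) + 3/2) by ring,
            gamma_shift _ (by positivity) m]
        have g32 : Real.Gamma (3/2 : ℝ) = Real.sqrt π / 2 := by
          rw [show (3/2:ℝ) = 1/2 + 1 by norm_num, Real.Gamma_add_one (by norm_num),
            Real.Gamma_one_half_eq]
          ring
        have g5 : Real.Gamma ((m:ℝ) + 3/2) = poch (3/2) m * (Real.sqrt π / 2) := by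
          rw [gamma_shift (3/2 : ℝ) (by norm_num) m, g32]
        rw [g1, g2, g3, g4, g5]
        have hb : poch (3/2 : ℝ) m ≠ 0 := (poch_pos (by norm_num) m).ne'
        have hc : poch ((n:ℝ)+3/2) m ≠ 0 := (poch_pos (by positivity) m).ne'
        have hn : ((Nat.factorial n : ℕ):ℝ) ≠ 0 := by
          exact_mod_cast (Nat.factorial_pos n).ne'
        have hππ : Real.sqrt π * Real.sqrt π = π := Real.mul_self_sqrt Real.pi_pos.le
        have d1 : Real.Gamma ((n:ℝ)+3/2) * (poch (3/2) m * poch ((n:ℝ)+3/2) m) ≠ 0 :=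
          mul_ne_zero hΓn.ne' (mul_ne_zero hb hc)
        have d2 : 2 * (Nat.factorial n : ℝ) * (poch ((n:ℝ)+3/2) m * Real.Gamma ((n:ℝ)+3/2)) *
            (poch (3/2) m * (Real.sqrt π / 2)) ≠ 0 := by
          apply mul_ne_zero (mul_ne_zero (mul_ne_zero two_ne_zero hn)
            (mul_ne_zero hc hΓn.ne'))
          exact mul_ne_zero hb (by positivity)
        rw [div_mul_div_comm, div_eq_div_iff d1 d2]
        linear_combination ((Nat.factorial m : ℝ) * poch ((n:ℝ)+1) m * (Nat.factorial n : ℝ) *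
          Real.Gamma ((n:ℝ)+3/2) * poch (3/2) m * poch ((n:ℝ)+3/2) m) * hππ
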